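/- Let z_1,…,z_N be N distinct complex numbers, let α be a complex number with α ≠ z_k for all k, let m ≥ 0, and let D be the N×N complex matrix with D_{ii} = Σ_{k≠i} 1/(z_i − z_k) − m/(z_i − α) and, for i ≠ j, D_{ij} = ((z_j − α)^m/(z_i − α)^m) · ω'(z_i)/((z_i − z_j) ω'(z_j)), where ω'(z_i) = ∏_{k≠i}(z_i − z_k). If q is a complex polynomial of degree at most N−1 and f(z) = q(z)/(z − α)^m, then for every i, f'(z_i) = Σ_{j=1}^N D_{ij} f(z_j). -/

import Mathlib

open Finset

open Polynomial in
private lemma deriv_prod_linear_eval {ι : Type*} [DecidableEq ι] (v : ι → ℂ) (s : Finset ι)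
    (x : ℂ) :
    (Polynomial.derivative (∏ k ∈ s, (X - C (v k)))).eval x
      = ∑ l ∈ s, ∏ k ∈ s.erase l, (x - v k) := by
  induction s using Finset.induction_on with
  | empty => simp
  | @insert a s ha ih =>
    rw [Finset.prod_insert ha, derivative_mul, derivative_sub, derivative_X, derivative_C,
      sub_zero, one_mul, eval_add, eval_mul, eval_sub, eval_X, eval_C, ih,
      Finset.sum_insert ha, Finset.erase_insert ha]
    rw [Finset.mul_sum]
    congr 1
    · simp [eval_prod]
    · refine Finset.sum_congr rfl fun l hl => ?_
      rw [Finset.erase_insert_of_ne (by rintro rfl; exact ha hl),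
        Finset.prod_insert (fun h => ha (Finset.mem_of_mem_erase h))]

open Polynomial in
private lemma star_identity (N : ℕ) (zs : Fin N → ℂ) (hz : Function.Injective zs)
    (q : Polynomial ℂ) (hq : q.degree < (N : WithBot ℕ)) (i : Fin N) :
    q.derivative.eval (zs i) =
      q.eval (zs i) * (∑ k ∈ univ.erase i, 1 / (zs i - zs k)) +
      ∑ j ∈ univ.erase i, (∏ k ∈ univ.erase i, (zs i - zs k)) * q.eval (zs j) /
        ((zs i - zs j) * ∏ k ∈ univ.erase j, (zs j - zs k)) := by
  classical
  have hzz : ∀ {a b : Fin N}, a ≠ b → zs a - zs b ≠ 0 := fun h =>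
    sub_ne_zero.2 fun e => h (hz e)
  have hw : ∀ j, (∏ k ∈ univ.erase j, (zs j - zs k)) ≠ 0 := fun j =>
    Finset.prod_ne_zero_iff.2 fun k hk => hzz (Finset.ne_of_mem_erase hk).symm
  have hvs : Set.InjOn zs (univ : Finset (Fin N)) := hz.injOn
  have hcard : q.degree < #(univ : Finset (Fin N)) := by simpa using hq
  have hrep := Lagrange.eq_interpolate hvs hcard
  have hbasis : ∀ j : Fin N, Lagrange.basis univ zs j
      = C ((∏ k ∈ univ.erase j, (zs j - zs k))⁻¹) * ∏ k ∈ univ.erase j, (X - C (zs k)) := by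
    intro j
    rw [Lagrange.basis]
    simp_rw [Lagrange.basisDivisor]
    rw [Finset.prod_mul_distrib, ← map_prod, ← Finset.prod_inv_distrib]
  have hA : q.derivative.eval (zs i)
      = ∑ j : Fin N, q.eval (zs j) * (∏ k ∈ univ.erase j, (zs j - zs k))⁻¹ *
          ∑ l ∈ univ.erase j, ∏ k ∈ (univ.erase j).erase l, (zs i - zs k) := by
    conv_lhs => rw [hrep, Lagrange.interpolate_apply]
    rw [derivative_sum, eval_finset_sum]
    refine Finset.sum_congr rfl fun j _ => ?_
    rw [hbasis, ← mul_assoc, ← C_mul, derivative_C_mul, eval_mul, eval_C,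
      deriv_prod_linear_eval]
  rw [hA, ← Finset.add_sum_erase _ _ (Finset.mem_univ i)]
  congr 1
  · -- diagonal term
    have hterm : ∀ l ∈ univ.erase i, ∏ k ∈ (univ.erase i).erase l, (zs i - zs k)
        = (∏ k ∈ univ.erase i, (zs i - zs k)) * (1 / (zs i - zs l)) := by
      intro l hl
      rw [mul_one_div, eq_div_iff (hzz (Finset.ne_of_mem_erase hl).symm),
        Finset.prod_erase_mul _ _ hl]
    rw [Finset.sum_congr rfl hterm, ← Finset.mul_sum, mul_assoc,
      inv_mul_cancel_left₀ (hw i)]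
  · -- off-diagonal terms
    refine Finset.sum_congr rfl fun j hj => ?_
    have hij : i ≠ j := (Finset.ne_of_mem_erase hj).symm
    have hij' : j ≠ i := Finset.ne_of_mem_erase hj
    have hE : ∑ l ∈ univ.erase j, ∏ k ∈ (univ.erase j).erase l, (zs i - zs k)
        = (∏ k ∈ univ.erase i, (zs i - zs k)) / (zs i - zs j) := by
      rw [Finset.sum_eq_single_of_mem i (Finset.mem_erase.2 ⟨hij, Finset.mem_univ i⟩)]
      · rw [Finset.erase_right_comm, eq_div_iff (hzz hij)]
        exact Finset.prod_erase_mul _ _ (Finset.mem_erase.2 ⟨hij', Finset.mem_univ j⟩)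
      · intro l hl hli
        exact Finset.prod_eq_zero
          (Finset.mem_erase.2 ⟨Ne.symm hli, Finset.mem_erase.2 ⟨hij, Finset.mem_univ i⟩⟩)
          (sub_self _)
    rw [hE]
    field_simp [hw j, hzz hij]

/-- The rational differentiation matrix for a pole of order `m` at `α` is exact on
rational functions `f z = q z / (z − α)^m` with `deg q ≤ N − 1`:
`f'(z i) = Σ_j D i j * f (z j)`. -/
theorem rational_differentiation_matrix (N : ℕ) (zs : Fin N → ℂ)
    (hz : Function.Injective zs) (α : ℂ) (hα : ∀ k, α ≠ zs k) (m : ℕ)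
    (D : Matrix (Fin N) (Fin N) ℂ)
    (hD : ∀ i j, D i j =
      if i = j then
        (∑ k ∈ Finset.univ.erase i, 1 / (zs i - zs k)) - m / (zs i - α)
      else
        ((zs j - α) ^ m / (zs i - α) ^ m) *
          ((∏ k ∈ Finset.univ.erase i, (zs i - zs k)) /
            ((zs i - zs j) * ∏ k ∈ Finset.univ.erase j, (zs j - zs k))))
    (q : Polynomial ℂ) (hq : q.degree ≤ (N - 1 : ℕ)) (i : Fin N) :
    deriv (fun z : ℂ => q.eval z / (z - α) ^ m) (zs i) =
      ∑ j, D i j * (q.eval (zs j) / (zs j - α) ^ m) := by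
  classical
  have hN : 0 < N := i.pos
  have hzz : ∀ {a b : Fin N}, a ≠ b → zs a - zs b ≠ 0 := fun h =>
    sub_ne_zero.2 fun e => h (hz e)
  have hxα : ∀ j, zs j - α ≠ 0 := fun j => sub_ne_zero.2 (Ne.symm (hα j))
  have hw : ∀ j, (∏ k ∈ univ.erase j, (zs j - zs k)) ≠ 0 := fun j =>
    Finset.prod_ne_zero_iff.2 fun k hk => hzz (Finset.ne_of_mem_erase hk).symm
  have hdeg : q.degree < (N : WithBot ℕ) :=
    lt_of_le_of_lt hq (by exact_mod_cast Nat.sub_lt hN Nat.one_pos)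
  have hnum : HasDerivAt (fun z : ℂ => q.eval z) (q.derivative.eval (zs i)) (zs i) :=
    q.hasDerivAt _
  have hden : HasDerivAt (fun z : ℂ => (z - α) ^ m) ((m : ℂ) * (zs i - α) ^ (m - 1)) (zs i) := by
    have h1 : HasDerivAt (fun z : ℂ => z - α) 1 (zs i) := (hasDerivAt_id _).sub_const α
    simpa using h1.fun_pow m
  have hdiv := hnum.fun_div hden (pow_ne_zero m (hxα i))
  rw [hdiv.deriv]
  rw [← Finset.add_sum_erase _ _ (Finset.mem_univ i)]
  have hterm : ∀ j ∈ univ.erase i, D i j * (q.eval (zs j) / (zs j - α) ^ m)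
      = ((∏ k ∈ univ.erase i, (zs i - zs k)) * q.eval (zs j) /
          ((zs i - zs j) * ∏ k ∈ univ.erase j, (zs j - zs k))) / (zs i - α) ^ m := by
    intro j hj
    have hij : i ≠ j := (Finset.ne_of_mem_erase hj).symm
    rw [hD, if_neg hij]
    field_simp [hw j, hzz hij, pow_ne_zero m (hxα j), pow_ne_zero m (hxα i)]
  rw [Finset.sum_congr rfl hterm, ← Finset.sum_div, hD, if_pos rfl]
  rw [star_identity N zs hz q hdeg i]
  set B := q.eval (zs i)
  set S := ∑ k ∈ univ.erase i, 1 / (zs i - zs k)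
  set T := ∑ j ∈ univ.erase i, (∏ k ∈ univ.erase i, (zs i - zs k)) * q.eval (zs j) /
    ((zs i - zs j) * ∏ k ∈ univ.erase j, (zs j - zs k))
  have hx : zs i - α ≠ 0 := hxα i
  rcases m with _ | n
  · simp [mul_comm]
  · simp only [Nat.add_sub_cancel]
    field_simp
    ring
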